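/- For every n ≥ 0 the polynomial identity Σ_{j=0}^{n} φ(j)·d_{n−j}(v) = φ(n)·(1 + v + v² + ⋯ + v^{2n}) holds in ℝ[v]. -/

import Mathlib

open Polynomial

def phi (n : ℕ) : ℕ := (2 * n).factorial / (2 ^ n * n.factorial)

lemma phi_eq (n : ℕ) : phi n = Nat.doubleFactorial (2 * n - 1) := by
  have h : (2 * n).factorial = 2 ^ n * n.factorial * Nat.doubleFactorial (2 * n - 1) := by
    cases n with
    | zero => rfl
    | succ k =>
      have := Nat.factorial_eq_mul_doubleFactorial (2 * (k + 1) - 1)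
      have h2 : 2 * (k + 1) - 1 + 1 = 2 * (k + 1) := by omega
      rw [h2] at this
      rw [this, Nat.doubleFactorial_two_mul]
  rw [phi, h, Nat.mul_div_cancel_left]
  positivity

lemma phi_zero : phi 0 = 1 := rfl

lemma phi_succ (n : ℕ) : phi (n + 1) = (2 * n + 1) * phi n := by
  rw [phi_eq, phi_eq]
  have h1 : 2 * (n + 1) - 1 = 2 * n + 1 := by omega
  rw [h1]
  cases n with
  | zero => rfl
  | succ k =>
    have h2 : 2 * (k + 1) + 1 = (2 * k + 1) + 2 := by omega
    have h3 : 2 * (k + 1) - 1 = 2 * k + 1 := by omega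
    rw [h2, Nat.doubleFactorial_add_two, h3]

lemma sum_tri {M : Type*} [AddCommMonoid M] (n : ℕ) (F : ℕ → ℕ → M) :
    ∑ j ∈ Finset.range n, ∑ l ∈ Finset.range (n - j), F j l =
    ∑ l ∈ Finset.range n, ∑ j ∈ Finset.range (n - l), F j l := by
  rw [Finset.sum_sigma', Finset.sum_sigma']
  apply Finset.sum_nbij' (fun p => ⟨p.2, p.1⟩) (fun p => ⟨p.2, p.1⟩) <;>
    (intro p hp) <;>
    (try simp only [Finset.mem_sigma, Finset.mem_range] at hp ⊢) <;>
    (try omega) <;> rfl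

section PS
open PowerSeries
noncomputable def PhiS : PowerSeries ℝ := PowerSeries.mk fun n => (phi n : ℝ)
noncomputable def PsiS : PowerSeries ℝ := PhiS⁻¹

lemma constCoeff_PhiS : PowerSeries.constantCoeff PhiS ≠ 0 := by
  rw [← PowerSeries.coeff_zero_eq_constantCoeff_apply, PhiS, coeff_mk, phi_zero]; norm_num

lemma PhiS_mul_PsiS : PhiS * PsiS = 1 := PowerSeries.mul_inv_cancel _ constCoeff_PhiS

lemma psi_zero : (PowerSeries.coeff 0) PsiS = 1 := by
  rw [PowerSeries.coeff_zero_eq_constantCoeff_apply, PsiS, PowerSeries.constantCoeff_inv,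
    ← PowerSeries.coeff_zero_eq_constantCoeff_apply, PhiS, coeff_mk, phi_zero]
  norm_num

lemma PhiS_ode : PhiS = 1 + PowerSeries.C 2 * (PowerSeries.X ^ 2 * (d⁄dX ℝ PhiS))
    + PowerSeries.X * PhiS := by
  ext n
  simp only [map_add, PowerSeries.coeff_one, PowerSeries.coeff_C_mul]
  cases n with
  | zero =>
    rw [if_pos rfl, PowerSeries.coeff_X_pow_mul' (d⁄dX ℝ PhiS) 2 0]
    have hx : (PowerSeries.coeff 0) (PowerSeries.X * PhiS) = 0 := by
      rw [PowerSeries.coeff_zero_eq_constantCoeff_apply, map_mul]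
      simp
    rw [hx, PhiS, coeff_mk, phi_zero]
    norm_num
  | succ k =>
    rw [if_neg (Nat.succ_ne_zero k), PowerSeries.coeff_succ_X_mul]
    cases k with
    | zero =>
      rw [PowerSeries.coeff_X_pow_mul' (d⁄dX ℝ PhiS) 2 1]
      rw [if_neg (by omega : ¬ (2 ≤ 1))]
      rw [PhiS, coeff_mk, coeff_mk, phi_succ, phi_zero]
      push_cast; ring
    | succ j =>
      rw [show j + 1 + 1 = j + 2 from rfl, PowerSeries.coeff_X_pow_mul (d⁄dX ℝ PhiS) 2 j,
        PowerSeries.coeff_derivative]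
      rw [PhiS]
      simp only [coeff_mk]
      rw [phi_succ]
      push_cast; ring

lemma PsiS_ode : PsiS = PsiS ^ 2 - PowerSeries.C 2 * (PowerSeries.X ^ 2 * (d⁄dX ℝ PsiS))
    + PowerSeries.X * PsiS := by
  have hC : d⁄dX ℝ PsiS = -PsiS ^ 2 * (d⁄dX ℝ PhiS) := by
    rw [PsiS]; exact PowerSeries.derivative_inv' PhiS
  have hA := PhiS_ode
  have hB := PhiS_mul_PsiS
  linear_combination (PsiS ^ 2) * hA + (PowerSeries.C 2 * PowerSeries.X ^ 2) * hC +
    (PowerSeries.X * PsiS - PsiS) * hB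

noncomputable def mr (n : ℕ) : ℝ := -((PowerSeries.coeff (n + 1)) PsiS)

lemma mr_zero : mr 0 = 1 := by
  have h := congrArg (PowerSeries.coeff 1) PhiS_mul_PsiS
  rw [PowerSeries.coeff_one, if_neg one_ne_zero, PowerSeries.coeff_mul,
    Finset.Nat.sum_antidiagonal_eq_sum_range_succ_mk] at h
  rw [Finset.sum_range_succ, Finset.sum_range_one] at h
  rw [PhiS] at h
  simp only [coeff_mk] at h
  rw [psi_zero, phi_zero, phi_succ, phi_zero] at h
  rw [mr]
  have h1 : ((PowerSeries.coeff 1) PsiS) = -1 := by push_cast at h; linarith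
  rw [h1]; norm_num

lemma mr_rec (n : ℕ) : mr (n + 1) =
    (∑ k ∈ Finset.range (n + 1), mr k * mr (n - k)) + (2 * n + 1) * mr n := by
  have h := congrArg (PowerSeries.coeff (n + 2)) PsiS_ode
  rw [map_add, map_sub, PowerSeries.coeff_C_mul,
    PowerSeries.coeff_X_pow_mul (d⁄dX ℝ PsiS) 2 n, PowerSeries.coeff_derivative,
    PowerSeries.coeff_succ_X_mul, pow_two, PowerSeries.coeff_mul,
    Finset.Nat.sum_antidiagonal_eq_sum_range_succ_mk] at h
  -- h : ψ(n+2) = (Σ_{k∈range(n+3)} ψ k * ψ (n+2-k)) - 2 * (ψ(n+1)*(n+1)) + ψ(n+1)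
  rw [Finset.sum_range_succ, Finset.sum_range_succ'] at h
  -- now: Σ_{k∈range(n+1)} ψ(k+1) ψ(n+2-(k+1)) + ψ0·ψ(n+2) + ψ(n+2)·ψ0
  rw [psi_zero] at h
  simp only [Nat.sub_self, Nat.sub_zero] at h
  rw [psi_zero] at h
  have hs : ∀ k ∈ Finset.range (n + 1),
      (PowerSeries.coeff (k + 1)) PsiS * (PowerSeries.coeff (n + 2 - (k + 1))) PsiS
      = mr k * mr (n - k) := by
    intro k hk
    rw [Finset.mem_range] at hk
    rw [mr, mr, show n + 2 - (k + 1) = (n - k) + 1 by omega]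
    ring
  rw [Finset.sum_congr rfl hs] at h
  rw [mr, mr]
  push_cast at h ⊢
  linarith

lemma m_cast (m : ℕ → ℕ) (hm0 : m 0 = 1)
    (hm : ∀ n : ℕ, m (n + 1) =
      (∑ k ∈ Finset.range (n + 1), m k * m (n - k)) + (2 * (n + 1) - 1) * m n) :
    ∀ n, (m n : ℝ) = mr n := by
  intro n
  induction n using Nat.strong_induction_on with
  | _ n ih =>
    cases n with
    | zero => rw [hm0, mr_zero]; norm_num
    | succ k =>
      rw [hm k, mr_rec k]
      have h1 : (2 * (k + 1) - 1) = 2 * k + 1 := by omega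
      rw [h1]
      push_cast
      rw [ih k (by omega)]
      congr 1
      apply Finset.sum_congr rfl
      intro i hi
      rw [Finset.mem_range] at hi
      rw [ih i (by omega), ih (k - i) (by omega)]

lemma conv_A (m : ℕ → ℕ) (hm0 : m 0 = 1)
    (hm : ∀ n : ℕ, m (n + 1) =
      (∑ k ∈ Finset.range (n + 1), m k * m (n - k)) + (2 * (n + 1) - 1) * m n) :
    ∀ n : ℕ, (∑ i ∈ Finset.range (n + 1), (m i : ℝ) * (phi (n - i) : ℝ)) = (phi (n + 1) : ℝ) := by
  intro n
  have h := congrArg (PowerSeries.coeff (n + 1)) PhiS_mul_PsiS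
  rw [PowerSeries.coeff_one, if_neg (Nat.succ_ne_zero n), PowerSeries.coeff_mul,
    Finset.Nat.sum_antidiagonal_eq_sum_range_succ_mk, Finset.sum_range_succ] at h
  simp only [Nat.sub_self] at h
  rw [psi_zero, PhiS] at h
  simp only [coeff_mk] at h
  rw [← Finset.sum_range_reflect] at h
  have h2 : ∀ i ∈ Finset.range (n + 1),
      (phi (n + 1 - 1 - i) : ℝ) * (PowerSeries.coeff (n + 1 - (n + 1 - 1 - i))) PsiS
      = -((m i : ℝ) * (phi (n - i) : ℝ)) := by
    intro i hi
    rw [Finset.mem_range] at hi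
    rw [m_cast m hm0 hm i, mr, show n + 1 - (n + 1 - 1 - i) = i + 1 by omega,
      show n + 1 - 1 - i = n - i by omega]
    ring
  rw [Finset.sum_congr rfl h2, Finset.sum_neg_distrib] at h
  linarith

end PS

noncomputable def Qp (k : ℕ) : ℝ[X] := ∑ t ∈ Finset.range (2 * k + 1), X ^ t

noncomputable def Dp (m : ℕ → ℕ) (n : ℕ) : ℝ[X] :=
  C ((phi n : ℝ)) * Qp n -
    ∑ i ∈ Finset.range n, C ((m i : ℝ) * (phi (n - 1 - i) : ℝ)) * Qp (n - 1 - i)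

noncomputable def bet (m : ℕ → ℕ) (k l : ℕ) : ℝ :=
  if l = k then (phi k : ℝ) else -((m (k - 1 - l) : ℝ) * (phi l : ℝ))

noncomputable def Ee (m : ℕ → ℕ) (k : ℕ) : ℝ[X] :=
  ∑ l ∈ Finset.range (k + 1), C (bet m k l) * (X ^ (2 * l + 1) - 1)

lemma Qp_mul (k : ℕ) : Qp k * (X - 1) = X ^ (2 * k + 1) - 1 := geom_sum_mul X (2 * k + 1)

lemma Ee_eq (m : ℕ → ℕ) (k : ℕ) : (X - 1) * Dp m k = Ee m k := by
  rw [Dp, Ee, mul_sub, Finset.mul_sum, Finset.sum_range_succ]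
  have h1 : (X - 1) * (C ((phi k : ℝ)) * Qp k) = C (bet m k k) * (X ^ (2 * k + 1) - 1) := by
    rw [bet, if_pos rfl, ← Qp_mul]; ring
  rw [h1]
  have h2 : ∑ i ∈ Finset.range k, (X - 1) * (C ((m i : ℝ) * (phi (k - 1 - i) : ℝ)) *
      Qp (k - 1 - i)) = -∑ l ∈ Finset.range k, C (bet m k l) * (X ^ (2 * l + 1) - 1) := by
    rw [← Finset.sum_range_reflect (fun i => (X - 1) *
      (C ((m i : ℝ) * (phi (k - 1 - i) : ℝ)) * Qp (k - 1 - i))) k, ← Finset.sum_neg_distrib]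
    apply Finset.sum_congr rfl
    intro l hl
    rw [Finset.mem_range] at hl
    rw [show k - 1 - (k - 1 - l) = l by omega, bet, if_neg (by omega : ¬ l = k), ← Qp_mul,
      map_neg]
    ring
  rw [h2]
  ring

section Main
variable (m : ℕ → ℕ) (hm0 : m 0 = 1)
  (hm : ∀ n : ℕ, m (n + 1) =
      (∑ k ∈ Finset.range (n + 1), m k * m (n - k)) + (2 * (n + 1) - 1) * m n)
include hm0 hm

lemma Sbet (k : ℕ) :
    (∑ l ∈ Finset.range (k + 1), bet m k l) = if k = 0 then (1 : ℝ) else 0 := by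
  cases k with
  | zero => simp [bet, phi_zero]
  | succ j =>
    rw [if_neg (Nat.succ_ne_zero j), Finset.sum_range_succ, bet, if_pos rfl]
    have h1 : ∑ l ∈ Finset.range (j + 1), bet m (j + 1) l =
        -∑ l ∈ Finset.range (j + 1), (m (j - l) : ℝ) * (phi l : ℝ) := by
      rw [← Finset.sum_neg_distrib]
      apply Finset.sum_congr rfl
      intro l hl
      rw [Finset.mem_range] at hl
      rw [bet, if_neg (by omega : ¬ l = j + 1), show j + 1 - 1 - l = j - l by omega]
    have h2 : ∑ l ∈ Finset.range (j + 1), (m (j - l) : ℝ) * (phi l : ℝ) = (phi (j + 1) : ℝ) := by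
      rw [← conv_A m hm0 hm j, ← Finset.sum_range_reflect
        (fun i => (m i : ℝ) * (phi (j - i) : ℝ)) (j + 1)]
      apply Finset.sum_congr rfl
      intro l hl
      rw [Finset.mem_range] at hl
      rw [show j + 1 - 1 - l = j - l by omega, show j - (j - l) = l by omega]
    rw [h1, h2]
    ring

lemma bet_odd (n l : ℕ) (hl : l ≤ n) :
    bet m (n + 1) (l + 1) = (2 * (l : ℝ) + 1) * bet m n l := by
  rcases eq_or_lt_of_le hl with h | h
  · subst h
    rw [bet, bet, if_pos rfl, if_pos rfl, phi_succ]
    push_cast; ring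
  · rw [bet, bet, if_neg (by omega : ¬ l + 1 = n + 1), if_neg (by omega : ¬ l = n),
      show n + 1 - 1 - (l + 1) = n - 1 - l by omega, phi_succ]
    push_cast; ring

lemma bet_even (n l : ℕ) (hl : l ≤ n) :
    ∑ i ∈ Finset.range (n + 1 - l), (m i : ℝ) * bet m (n - i) l
      = ((2 * (l : ℝ) + 1) - 2 * (n : ℝ)) * bet m n l := by
  rcases eq_or_lt_of_le hl with h | h
  · subst h
    rw [show l + 1 - l = 1 by omega, Finset.sum_range_one, Nat.sub_zero, bet, if_pos rfl, hm0]
    push_cast; ring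
  · obtain ⟨r, hrn⟩ : ∃ r, n = l + r + 1 := ⟨n - l - 1, by omega⟩
    have hr2 : n + 1 - l = r + 2 := by omega
    rw [hr2, Finset.sum_range_succ, show n - (r + 1) = l by omega, bet, if_pos rfl]
    have h1 : ∑ i ∈ Finset.range (r + 1), (m i : ℝ) * bet m (n - i) l =
        -∑ i ∈ Finset.range (r + 1), (m i : ℝ) * ((m (r - i) : ℝ) * (phi l : ℝ)) := by
      rw [← Finset.sum_neg_distrib]
      apply Finset.sum_congr rfl
      intro i hi
      rw [Finset.mem_range] at hi
      rw [bet, if_neg (by omega : ¬ l = n - i), show n - i - 1 - l = r - i by omega]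
      ring
    rw [h1]
    have hmr : ((m (r + 1) : ℝ)) =
        (∑ k ∈ Finset.range (r + 1), (m k : ℝ) * (m (r - k) : ℝ)) + (2 * (r : ℝ) + 1) * (m r : ℝ) := by
      have := hm r
      rw [show 2 * (r + 1) - 1 = 2 * r + 1 by omega] at this
      push_cast [this]
      ring
    rw [bet, if_neg (by omega : ¬ l = n), show n - 1 - l = r by omega]
    have hexp : ∑ i ∈ Finset.range (r + 1), (m i : ℝ) * ((m (r - i) : ℝ) * (phi l : ℝ)) =
        (∑ k ∈ Finset.range (r + 1), (m k : ℝ) * (m (r - k) : ℝ)) * (phi l : ℝ) := by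
      rw [Finset.sum_mul]; apply Finset.sum_congr rfl; intros; ring
    rw [hexp]
    have hn : (n : ℝ) = (l : ℝ) + (r : ℝ) + 1 := by exact_mod_cast congrArg (Nat.cast : ℕ → ℝ) hrn
    rw [hmr]
    rw [hn]
    ring

lemma msum (n : ℕ) :
    ∑ i ∈ Finset.range (n + 1), (m i : ℝ) *
      (∑ l ∈ Finset.range (n - i + 1), bet m (n - i) l) = (m n : ℝ) := by
  rw [Finset.sum_range_succ, Nat.sub_self]
  have h1 : ∑ i ∈ Finset.range n, (m i : ℝ) *
      (∑ l ∈ Finset.range (n - i + 1), bet m (n - i) l) = 0 := by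
    apply Finset.sum_eq_zero
    intro i hi
    rw [Finset.mem_range] at hi
    rw [Sbet m hm0 hm, if_neg (by omega : ¬ n - i = 0), mul_zero]
  rw [h1, Sbet m hm0 hm, if_pos rfl]
  ring

lemma Ee_star (n : ℕ) :
    Ee m (n + 1) = C (2 * (n : ℝ)) * X * Ee m n
      + X * ∑ i ∈ Finset.range (n + 1), C ((m i : ℝ)) * Ee m (n - i)
      + X ^ 2 * (X - 1) * derivative (Ee m n) := by
  -- LHS normal form
  have hL : Ee m (n + 1) =
      (∑ l ∈ Finset.range (n + 1), C ((2 * (l : ℝ) + 1) * bet m n l) * X ^ (2 * l + 3))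
        - C ((m n : ℝ)) * X := by
    rw [Ee]
    have hsplit : ∀ l ∈ Finset.range (n + 2), C (bet m (n + 1) l) * (X ^ (2 * l + 1) - 1)
        = C (bet m (n + 1) l) * X ^ (2 * l + 1) - C (bet m (n + 1) l) := by
      intro l _; ring
    rw [Finset.sum_congr rfl hsplit, Finset.sum_sub_distrib, ← map_sum,
      Sbet m hm0 hm (n + 1), if_neg (Nat.succ_ne_zero n), map_zero, sub_zero,
      Finset.sum_range_succ']
    have h0 : C (bet m (n + 1) 0) * X ^ (2 * 0 + 1) = -(C ((m n : ℝ)) * X) := by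
      rw [bet, if_neg (Nat.succ_ne_zero n).symm, show n + 1 - 1 - 0 = n by omega, phi_zero]
      push_cast
      rw [map_neg]
      ring
    rw [h0]
    have h1 : ∀ l ∈ Finset.range (n + 1), C (bet m (n + 1) (l + 1)) * X ^ (2 * (l + 1) + 1)
        = C ((2 * (l : ℝ) + 1) * bet m n l) * X ^ (2 * l + 3) := by
      intro l hl
      rw [Finset.mem_range] at hl
      rw [bet_odd m hm0 hm n l (by omega), show 2 * (l + 1) + 1 = 2 * l + 3 by omega]
    rw [Finset.sum_congr rfl h1]
    ring
  -- first RHS piece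
  have hP1 : C (2 * (n : ℝ)) * X * Ee m n =
      ∑ l ∈ Finset.range (n + 1), C ((2 * (n : ℝ)) * bet m n l) * X ^ (2 * l + 2) := by
    rw [Ee, Finset.mul_sum]
    have hsplit : ∀ l ∈ Finset.range (n + 1),
        C (2 * (n : ℝ)) * X * (C (bet m n l) * (X ^ (2 * l + 1) - 1))
        = C ((2 * (n : ℝ)) * bet m n l) * X ^ (2 * l + 2) -
            C ((2 * (n : ℝ)) * bet m n l) * X := by
      intro l _
      simp only [map_mul]
      ring
    rw [Finset.sum_congr rfl hsplit, Finset.sum_sub_distrib, ← Finset.sum_mul, ← map_sum,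
      ← Finset.mul_sum, Sbet m hm0 hm n]
    rcases Nat.eq_zero_or_pos n with h | h
    · subst h; norm_num
    · rw [if_neg (by omega : ¬ n = 0), mul_zero, map_zero, zero_mul, sub_zero]
  -- second RHS piece
  have hP2 : X * ∑ i ∈ Finset.range (n + 1), C ((m i : ℝ)) * Ee m (n - i) =
      (∑ l ∈ Finset.range (n + 1),
        C (((2 * (l : ℝ) + 1) - 2 * (n : ℝ)) * bet m n l) * X ^ (2 * l + 2))
        - C ((m n : ℝ)) * X := by
    rw [Finset.mul_sum]
    have hsplit : ∀ i ∈ Finset.range (n + 1), X * (C ((m i : ℝ)) * Ee m (n - i))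
        = (∑ l ∈ Finset.range (n + 1 - i),
            C ((m i : ℝ) * bet m (n - i) l) * X ^ (2 * l + 2))
          - C ((m i : ℝ) * ∑ l ∈ Finset.range (n - i + 1), bet m (n - i) l) * X := by
      intro i hi
      rw [Finset.mem_range] at hi
      rw [Ee, Finset.mul_sum, Finset.mul_sum, show n + 1 - i = n - i + 1 by omega,
        Finset.mul_sum, map_sum, Finset.sum_mul, ← Finset.sum_sub_distrib]
      apply Finset.sum_congr rfl
      intro l _
      simp only [map_mul]
      ring
    rw [Finset.sum_congr rfl hsplit, Finset.sum_sub_distrib]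
    congr 1
    · rw [sum_tri (n + 1) (fun i l => C ((m i : ℝ) * bet m (n - i) l) * X ^ (2 * l + 2))]
      apply Finset.sum_congr rfl
      intro l hl
      rw [Finset.mem_range] at hl
      rw [← Finset.sum_mul, ← map_sum, ← bet_even m hm0 hm n l (by omega)]
    · rw [← Finset.sum_mul, ← map_sum, msum m hm0 hm n]
  -- third RHS piece
  have hP3 : X ^ 2 * (X - 1) * derivative (Ee m n) =
      (∑ l ∈ Finset.range (n + 1), C ((2 * (l : ℝ) + 1) * bet m n l) * X ^ (2 * l + 3))
        - ∑ l ∈ Finset.range (n + 1), C ((2 * (l : ℝ) + 1) * bet m n l) * X ^ (2 * l + 2) := by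
    rw [Ee, derivative_sum, Finset.mul_sum, ← Finset.sum_sub_distrib]
    apply Finset.sum_congr rfl
    intro l _
    rw [derivative_C_mul, derivative_sub, derivative_one, derivative_X_pow,
      show 2 * l + 1 - 1 = 2 * l by omega, map_mul]
    push_cast
    ring
  rw [hL, hP1, hP2, hP3]
  have hcomb : (∑ l ∈ Finset.range (n + 1), C ((2 * (n : ℝ)) * bet m n l) * X ^ (2 * l + 2))
      + ∑ l ∈ Finset.range (n + 1),
          C (((2 * (l : ℝ) + 1) - 2 * (n : ℝ)) * bet m n l) * X ^ (2 * l + 2)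
      = ∑ l ∈ Finset.range (n + 1), C ((2 * (l : ℝ) + 1) * bet m n l) * X ^ (2 * l + 2) := by
    rw [← Finset.sum_add_distrib]
    apply Finset.sum_congr rfl
    intro l _
    rw [← add_mul, ← map_add]
    ring_nf
  linear_combination -hcomb

lemma Dp_rec (n : ℕ) : Dp m (n + 1) =
    X ^ 2 * Dp m n + C (2 * (n : ℝ)) * X * Dp m n +
      X * (∑ i ∈ Finset.range (n + 1), C ((m i : ℝ)) * Dp m (n - i)) -
      X ^ 2 * (1 - X) * derivative (Dp m n) := by
  have hc : (X - 1 : ℝ[X]) ≠ 0 := by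
    have h := Polynomial.X_sub_C_ne_zero (1 : ℝ)
    rwa [Polynomial.C_1] at h
  apply mul_left_cancel₀ hc
  have h1 := Ee_eq m (n + 1)
  have h2 := Ee_eq m n
  have h4 : (X - 1) * (X * ∑ i ∈ Finset.range (n + 1), C ((m i : ℝ)) * Dp m (n - i))
      = X * ∑ i ∈ Finset.range (n + 1), C ((m i : ℝ)) * Ee m (n - i) := by
    rw [Finset.mul_sum, Finset.mul_sum, Finset.mul_sum]
    apply Finset.sum_congr rfl
    intro i _
    rw [← Ee_eq m (n - i)]
    ring
  have h3 : derivative (Ee m n) = Dp m n + (X - 1) * derivative (Dp m n) := by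
    rw [← Ee_eq m n, derivative_mul, derivative_sub, derivative_X, derivative_one]
    ring
  have star := Ee_star m hm0 hm n
  linear_combination h1 + star - C (2 * (n : ℝ)) * X * h2 - h4 + X ^ 2 * (X - 1) * h3

lemma d_eq_Dp (d : ℕ → Polynomial ℝ) (hd0 : d 0 = 1)
    (hd : ∀ n : ℕ, d (n + 1) =
      X ^ 2 * d n + C (2 * (n : ℝ)) * X * d n +
        X * (∑ i ∈ Finset.range (n + 1), C ((m i : ℝ)) * d (n - i)) -
        X ^ 2 * (1 - X) * derivative (d n)) :
    ∀ n, d n = Dp m n := by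
  intro n
  induction n using Nat.strong_induction_on with
  | _ n ih =>
    cases n with
    | zero =>
      rw [hd0, Dp, phi_zero]
      simp [Qp]
    | succ k =>
      have hs : ∑ i ∈ Finset.range (k + 1), C ((m i : ℝ)) * d (k - i)
          = ∑ i ∈ Finset.range (k + 1), C ((m i : ℝ)) * Dp m (k - i) := by
        apply Finset.sum_congr rfl
        intro i hi
        rw [Finset.mem_range] at hi
        rw [ih (k - i) (by omega)]
      rw [hd k, Dp_rec m hm0 hm k, ih k (by omega), hs]

theorem main_identity (n : ℕ) :
    (∑ j ∈ Finset.range (n + 1), C ((phi j : ℝ)) * Dp m (n - j)) =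
      C ((phi n : ℝ)) * Qp n := by
  have hexp : ∀ j ∈ Finset.range (n + 1), C ((phi j : ℝ)) * Dp m (n - j)
      = C ((phi j : ℝ) * (phi (n - j) : ℝ)) * Qp (n - j)
        - ∑ l ∈ Finset.range (n - j), C ((phi j : ℝ) * ((m (n - j - 1 - l) : ℝ)
            * (phi l : ℝ))) * Qp l := by
    intro j hj
    rw [Finset.mem_range] at hj
    rw [Dp, mul_sub, Finset.mul_sum]
    congr 1
    · rw [map_mul, mul_assoc]
    · rw [← Finset.sum_range_reflect (fun i => C ((phi j : ℝ)) *
        (C ((m i : ℝ) * (phi (n - j - 1 - i) : ℝ)) * Qp (n - j - 1 - i))) (n - j)]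
      apply Finset.sum_congr rfl
      intro l hl
      rw [Finset.mem_range] at hl
      rw [show n - j - 1 - (n - j - 1 - l) = l by omega]
      simp only [map_mul]
      ring
  rw [Finset.sum_congr rfl hexp, Finset.sum_sub_distrib]
  -- first sum: reflect and peel top
  have hfirst : ∑ j ∈ Finset.range (n + 1), C ((phi j : ℝ) * (phi (n - j) : ℝ)) * Qp (n - j)
      = (∑ l ∈ Finset.range n, C ((phi (n - l) : ℝ) * (phi l : ℝ)) * Qp l)
        + C ((phi n : ℝ)) * Qp n := by
    rw [← Finset.sum_range_reflect (fun j => C ((phi j : ℝ) * (phi (n - j) : ℝ)) * Qp (n - j))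
      (n + 1)]
    have : ∀ j ∈ Finset.range (n + 1),
        C ((phi (n + 1 - 1 - j) : ℝ) * (phi (n - (n + 1 - 1 - j)) : ℝ)) * Qp (n - (n + 1 - 1 - j))
        = C ((phi (n - j) : ℝ) * (phi j : ℝ)) * Qp j := by
      intro j hj
      rw [Finset.mem_range] at hj
      rw [show n + 1 - 1 - j = n - j by omega, show n - (n - j) = j by omega]
    rw [Finset.sum_congr rfl this, Finset.sum_range_succ, Nat.sub_self, phi_zero]
    norm_num
  -- second sum: drop empty last term, swap, apply conv_A
  have hsecond : ∑ j ∈ Finset.range (n + 1), ∑ l ∈ Finset.range (n - j),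
        C ((phi j : ℝ) * ((m (n - j - 1 - l) : ℝ) * (phi l : ℝ))) * Qp l
      = ∑ l ∈ Finset.range n, C ((phi (n - l) : ℝ) * (phi l : ℝ)) * Qp l := by
    rw [Finset.sum_range_succ, Nat.sub_self, Finset.range_zero, Finset.sum_empty, add_zero,
      sum_tri n (fun j l => C ((phi j : ℝ) * ((m (n - j - 1 - l) : ℝ) * (phi l : ℝ))) * Qp l)]
    apply Finset.sum_congr rfl
    intro l hl
    rw [Finset.mem_range] at hl
    have hconv : ∑ j ∈ Finset.range (n - l), (phi j : ℝ) * ((m (n - j - 1 - l) : ℝ)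
        * (phi l : ℝ)) = (phi (n - l) : ℝ) * (phi l : ℝ) := by
      have hA := conv_A m hm0 hm (n - l - 1)
      rw [show n - l - 1 + 1 = n - l by omega] at hA
      rw [← Finset.sum_range_reflect (fun j => (phi j : ℝ) * ((m (n - j - 1 - l) : ℝ)
        * (phi l : ℝ))) (n - l)]
      have hstep : ∀ j ∈ Finset.range (n - l),
          (phi (n - l - 1 - j) : ℝ) * ((m (n - (n - l - 1 - j) - 1 - l) : ℝ) * (phi l : ℝ))
          = (m j : ℝ) * (phi (n - l - 1 - j) : ℝ) * (phi l : ℝ) := by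
        intro j hj
        rw [Finset.mem_range] at hj
        rw [show n - (n - l - 1 - j) - 1 - l = j by omega]
        ring
      rw [Finset.sum_congr rfl hstep, ← Finset.sum_mul, hA]
    rw [← Finset.sum_mul, ← map_sum, hconv]
  rw [hfirst, hsecond]
  ring

end Main


/-- For every `n ≥ 0` the polynomial identity
`Σ_{j=0}^{n} φ(j)·d_{n−j}(v) = φ(n)·(1 + v + v² + ⋯ + v^{2n})` holds in `ℝ[v]`. -/
theorem root_degree_convolution_identity
    (m : ℕ → ℕ) (hm0 : m 0 = 1)
    (hm : ∀ n : ℕ, m (n + 1) =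
      (∑ k ∈ Finset.range (n + 1), m k * m (n - k)) + (2 * (n + 1) - 1) * m n)
    (d : ℕ → Polynomial ℝ) (hd0 : d 0 = 1)
    (hd : ∀ n : ℕ, d (n + 1) =
      X ^ 2 * d n + C (2 * (n : ℝ)) * X * d n +
        X * (∑ i ∈ Finset.range (n + 1), C ((m i : ℝ)) * d (n - i)) -
        X ^ 2 * (1 - X) * derivative (d n)) :
    ∀ n : ℕ,
      (∑ j ∈ Finset.range (n + 1), C ((phi j : ℝ)) * d (n - j)) =
        C ((phi n : ℝ)) * ∑ k ∈ Finset.range (2 * n + 1), X ^ k := by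
  intro n
  have hD := d_eq_Dp m hm0 hm d hd0 hd
  have hs : ∑ j ∈ Finset.range (n + 1), C ((phi j : ℝ)) * d (n - j)
      = ∑ j ∈ Finset.range (n + 1), C ((phi j : ℝ)) * Dp m (n - j) := by
    apply Finset.sum_congr rfl
    intro j _
    rw [hD (n - j)]
  rw [hs, main_identity m hm0 hm n, Qp]
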